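/- Let k be a field, Ω a set, A a commutative k-algebra, and (∂_ω)_{ω∈Ω} a family of pairwise commuting k-derivations of A. Define for each ω ∈ Ω a product x ▷_ω y := x · ∂_ω(y). Then (A, (▷_ω)_{ω∈Ω}) is a multi-Novikov algebra; that is, for all x, y, z ∈ A and ω, τ ∈ Ω: (x ▷_ω y) ▷_τ z − x ▷_ω (y ▷_τ z) = (y ▷_ω x) ▷_τ z − y ▷_ω (x ▷_τ z); (x ▷_ω y) ▷_τ z − x ▷_ω (y ▷_τ z) = (x ▷_τ y) ▷_ω z − x ▷_τ (y ▷_ω z); and (x ▷_ω y) ▷_τ z = (x ▷_τ z) ▷_ω y. -/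
import Mathlib

/-- A commutative `k`-algebra with a family of pairwise commuting derivations
`(∂_ω)` becomes a multi-Novikov algebra under the products `x ▷_ω y := x · ∂_ω(y)`. -/
theorem multiNovikov_of_commuting_multiDifferential_commutative
    (k : Type*) [Field k] (Ω : Type*) (A : Type*) [CommRing A] [Algebra k A]
    (d : Ω → Derivation k A A)
    (hcomm : ∀ (ω τ : Ω) (a : A), d ω (d τ a) = d τ (d ω a))
    (rhd : Ω → A → A → A)
    (hrhd : ∀ (ω : Ω) (x y : A), rhd ω x y = x * d ω y) :
    ∀ (x y z : A) (ω τ : Ω),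
      (rhd τ (rhd ω x y) z - rhd ω x (rhd τ y z)
          = rhd τ (rhd ω y x) z - rhd ω y (rhd τ x z)) ∧
      (rhd τ (rhd ω x y) z - rhd ω x (rhd τ y z)
          = rhd ω (rhd τ x y) z - rhd τ x (rhd ω y z)) ∧
      (rhd τ (rhd ω x y) z = rhd ω (rhd τ x z) y) := by
  intro x y z ω τ
  simp only [hrhd, Derivation.leibniz, smul_eq_mul]
  refine ⟨by ring, ?_, by ring⟩
  rw [hcomm ω τ]
  ring
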